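/- Let G be an induced-minor-minimal non-2-cograph such that both G and its complement are induced-minor-minimal non-2-cographs. If G has a path of length greater than 3 all of whose internal vertices have degree two in G, then G is isomorphic to the 5-cycle C_5. -/

import Mathlib

/-- A graph is 2-connected if it has at least 3 vertices, is connected,
and remains connected after deleting any single vertex. -/
def TwoConnected {V : Type} [Fintype V] (G : SimpleGraph V) : Prop :=
  3 ≤ Fintype.card V ∧ G.Connected ∧
    ∀ v : V, (G.induce ({v}ᶜ : Set V)).Connected

/-- A graph is a 2-cograph if it has no induced subgraph `H` such that
both `H` and its complement are 2-connected. -/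
def IsTwoCograph {V : Type} [Fintype V] (G : SimpleGraph V) : Prop :=
  ∀ S : Finset V, ¬ (TwoConnected (G.induce (S : Set V)) ∧
      TwoConnected ((G.induce (S : Set V))ᶜ))

/-- `H` is an induced minor of `G`: witnessed by pairwise disjoint nonempty
connected branch sets, with adjacency in `H` iff there is an edge between
the corresponding branch sets. -/
def IsInducedMinor {V W : Type} (G : SimpleGraph V) (H : SimpleGraph W) : Prop :=
  ∃ B : W → Set V,
    (∀ w, (B w).Nonempty) ∧
    (∀ w, (G.induce (B w)).Connected) ∧
    (Pairwise fun w w' => Disjoint (B w) (B w')) ∧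
    ∀ w w', w ≠ w' → (H.Adj w w' ↔ ∃ a ∈ B w, ∃ b ∈ B w', G.Adj a b)

/-- `G` is an induced-minor-minimal non-2-cograph: `G` is not a 2-cograph but
every proper induced minor of `G` (one with fewer vertices) is a 2-cograph. -/
def IsIMMNon2Cograph {V : Type} [Fintype V] (G : SimpleGraph V) : Prop :=
  ¬ IsTwoCograph G ∧
    ∀ (W : Type) [Fintype W], ∀ H : SimpleGraph W,
      IsInducedMinor G H → Fintype.card W < Fintype.card V → IsTwoCograph H

section Aux

open Relation

variable {V W : Type}

/-- One step of adjacency inside a set. -/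
def StepOn (G : SimpleGraph V) (s : Set V) (a b : V) : Prop := a ∈ s ∧ b ∈ s ∧ G.Adj a b

lemma StepOn.symm' {G : SimpleGraph V} {s : Set V} : Symmetric (StepOn G s) :=
  fun _ _ h => ⟨h.2.1, h.1, h.2.2.symm⟩

/-- Connectivity of the induced subgraph on a set, expressed internally. -/
def ConnOn (G : SimpleGraph V) (s : Set V) : Prop :=
  s.Nonempty ∧ ∀ a ∈ s, ∀ b ∈ s, ReflTransGen (StepOn G s) a b

lemma rtg_symm {G : SimpleGraph V} {s : Set V} {a b : V}
    (h : ReflTransGen (StepOn G s) a b) : ReflTransGen (StepOn G s) b a :=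
  haveI : Std.Symm (StepOn G s) := ⟨StepOn.symm'⟩
  Std.Symm.symm _ _ h

lemma rtg_mono {G : SimpleGraph V} {s t : Set V} (hst : s ⊆ t) {a b : V}
    (h : ReflTransGen (StepOn G s) a b) : ReflTransGen (StepOn G t) a b := by
  induction h with
  | refl => exact ReflTransGen.refl
  | @tail c d hac hcd ih => exact ih.tail ⟨hst hcd.1, hst hcd.2.1, hcd.2.2⟩

lemma walk_rtg {G : SimpleGraph V} {s : Set V} :
    ∀ {x y : ↥s}, (G.induce s).Walk x y → ReflTransGen (StepOn G s) x y := by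
  intro x y w
  induction w with
  | nil => exact ReflTransGen.refl
  | cons h _ ih =>
      exact ReflTransGen.head ⟨(by simp), (by simp), by simpa using h⟩ ih

lemma rtg_reachable {G : SimpleGraph V} {s : Set V} {a b : V}
    (h : ReflTransGen (StepOn G s) a b) :
    ∀ (ha : a ∈ s) (hb : b ∈ s), (G.induce s).Reachable ⟨a, ha⟩ ⟨b, hb⟩ := by
  induction h with
  | refl => intro ha hb; rfl
  | @tail c d hac hcd ih =>
      intro ha hb
      exact (ih ha hcd.1).trans (SimpleGraph.Adj.reachable (by
        simp only [SimpleGraph.comap_adj, Function.Embedding.coe_subtype]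
        exact hcd.2.2))

lemma induce_connected_iff {G : SimpleGraph V} {s : Set V} :
    (G.induce s).Connected ↔ ConnOn G s := by
  rw [SimpleGraph.connected_iff]
  constructor
  · rintro ⟨hpre, ⟨x⟩⟩
    refine ⟨⟨x.1, x.2⟩, ?_⟩
    intro a ha b hb
    obtain ⟨w⟩ := hpre ⟨a, ha⟩ ⟨b, hb⟩
    exact walk_rtg w
  · rintro ⟨⟨x, hx⟩, h⟩
    refine ⟨?_, ⟨⟨x, hx⟩⟩⟩
    rintro ⟨a, ha⟩ ⟨b, hb⟩
    exact rtg_reachable (h a ha b hb) ha hb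

lemma connOn_map {G : SimpleGraph V} {H : SimpleGraph W} (f : V → W) {s : Set V} {t : Set W}
    (hmap : ∀ y ∈ s, f y ∈ t) (hsurj : ∀ w ∈ t, ∃ y ∈ s, f y = w)
    (hstep : ∀ a b, a ∈ s → b ∈ s → G.Adj a b → H.Adj (f a) (f b) ∨ f a = f b)
    (h : ConnOn G s) : ConnOn H t := by
  obtain ⟨⟨x, hx⟩, hconn⟩ := h
  have key : ∀ {a b : V}, ReflTransGen (StepOn G s) a b →
      ReflTransGen (StepOn H t) (f a) (f b) := by
    intro a b h'
    induction h' with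
    | refl => exact ReflTransGen.refl
    | @tail c d hac hcd ih =>
        rcases hstep c d hcd.1 hcd.2.1 hcd.2.2 with hadj | heq
        · exact ih.tail ⟨hmap _ hcd.1, hmap _ hcd.2.1, hadj⟩
        · exact heq ▸ ih
  refine ⟨⟨f x, hmap x hx⟩, ?_⟩
  intro a ha b hb
  obtain ⟨a', ha', rfl⟩ := hsurj a ha
  obtain ⟨b', hb', rfl⟩ := hsurj b hb
  exact key (hconn a' ha' b' hb')

lemma rtg_avoid {G : SimpleGraph V} {s : Set V} {y c : V}
    (hc : c ∈ s) (hcy : c ≠ y)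
    (hleaf : ∀ z ∈ s, G.Adj y z → z = c) :
    ∀ {a b : V}, ReflTransGen (StepOn G s) a b → a ≠ y → b ≠ y →
      ReflTransGen (StepOn G (s \ {y})) a b := by
  intro a b h hay hby
  have key : ∀ {x : V}, ReflTransGen (StepOn G s) x b →
      (x = y → ReflTransGen (StepOn G (s \ {y})) c b) ∧
      (x ≠ y → ReflTransGen (StepOn G (s \ {y})) x b) := by
    intro x h'
    induction h' using ReflTransGen.head_induction_on with
    | refl => exact ⟨fun hxy => absurd hxy hby, fun _ => ReflTransGen.refl⟩
    | @head x' x'' hstep htail ih =>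
        constructor
        · rintro rfl
          have hx'' : x'' = c := hleaf _ hstep.2.1 hstep.2.2
          subst hx''
          exact ih.2 hcy
        · intro hx'y
          by_cases hx''y : x'' = y
          · subst hx''y
            have : x' = c := hleaf _ hstep.1 hstep.2.2.symm
            subst this
            exact ih.1 rfl
          · exact (ReflTransGen.head ⟨⟨hstep.1, hx'y⟩, ⟨hstep.2.1, hx''y⟩, hstep.2.2⟩
              (ih.2 hx''y))
  exact (key h).2 hay

lemma connOn_erase_leaf {G : SimpleGraph V} {s : Set V} {y c : V}
    (h : ConnOn G s) (hc : c ∈ s) (hcy : c ≠ y)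
    (hleaf : ∀ z ∈ s, G.Adj y z → z = c) :
    ConnOn G (s \ {y}) := by
  refine ⟨⟨c, hc, hcy⟩, ?_⟩
  rintro a ⟨ha, hay⟩ b ⟨hb, hby⟩
  exact rtg_avoid hc hcy hleaf (h.2 a ha b hb) hay hby

/-- Reachability to `r` in exactly `n` steps inside `s`. -/
def ReachN (G : SimpleGraph V) (s : Set V) (r : V) : ℕ → V → Prop
  | 0, w => w = r
  | (n + 1), w => ∃ c, StepOn G s w c ∧ ReachN G s r n c

lemma rtg_reachN {G : SimpleGraph V} {s : Set V} {r : V} {a : V}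
    (h : ReflTransGen (StepOn G s) a r) : ∃ n, ReachN G s r n a := by
  induction h using ReflTransGen.head_induction_on with
  | refl => exact ⟨0, rfl⟩
  | @head x x' hstep htail ih =>
      obtain ⟨n, hn⟩ := ih
      exact ⟨n + 1, x', hstep, hn⟩

open scoped Classical in
/-- Every connected set has a non-cut vertex different from any fixed vertex `r`. -/
lemma exists_noncut {G : SimpleGraph V} {s : Set V} {r : V}
    (hfin : s.Finite) (h : ConnOn G s) (hr : r ∈ s) {x₀ : V} (hx₀ : x₀ ∈ s) (hx₀r : x₀ ≠ r) :
    ∃ o ∈ s, o ≠ r ∧ ConnOn G (s \ {o}) := by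
  have hex : ∀ a ∈ s, ∃ n, ReachN G s r n a := fun a ha => rtg_reachN (h.2 a ha r hr)
  set d : V → ℕ := fun a => if ha : ∃ n, ReachN G s r n a then Nat.find ha else 0 with hd
  obtain ⟨o, ho, hmax⟩ := (hfin.toFinset).exists_max_image d
    ⟨r, hfin.mem_toFinset.2 hr⟩
  rw [hfin.mem_toFinset] at ho
  replace hmax : ∀ a ∈ s, d a ≤ d o := fun a ha => hmax a (hfin.mem_toFinset.2 ha)
  have hdspec : ∀ a ∈ s, ReachN G s r (d a) a := by
    intro a ha
    have := hex a ha
    simp only [hd, dif_pos this]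
    exact Nat.find_spec this
  have hdmin : ∀ a (ha : a ∈ s) n, ReachN G s r n a → d a ≤ n := by
    intro a ha n hn
    have hh : ∃ n, ReachN G s r n a := ⟨n, hn⟩
    simp only [hd, dif_pos hh]
    exact Nat.find_min' hh hn
  have hdx₀ : 1 ≤ d x₀ := by
    rcases Nat.eq_zero_or_pos (d x₀) with h0 | h1
    · have := hdspec x₀ hx₀
      rw [h0] at this
      exact absurd this hx₀r
    · exact h1
  have hor : o ≠ r := by
    intro hor
    subst hor
    have : d o = 0 := Nat.le_zero.1 (hdmin o ho 0 rfl)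
    have := hmax x₀ hx₀
    omega
  have main : ∀ n a, a ∈ s → a ≠ o → d a ≤ n → ReflTransGen (StepOn G (s \ {o})) a r := by
    intro n
    induction n with
    | zero =>
        intro a ha hao h0
        have h1 := hdspec a ha
        rw [Nat.le_zero.1 h0] at h1
        have : a = r := h1
        exact this ▸ ReflTransGen.refl
    | succ n ih =>
        intro a ha hao hle
        by_cases hda : d a ≤ n
        · exact ih a ha hao hda
        · have hdan : d a = n + 1 := by omega
          have h1 := hdspec a ha
          rw [hdan] at h1
          obtain ⟨c, hstep, hc⟩ := h1
          have hcs : c ∈ s := hstep.2.1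
          have hdc : d c ≤ n := hdmin c hcs n hc
          have hco : c ≠ o := by
            intro hh
            subst hh
            have := hmax a ha
            omega
          exact ReflTransGen.head ⟨⟨ha, hao⟩, ⟨hcs, hco⟩, hstep.2.2⟩ (ih c hcs hco hdc)
  refine ⟨o, ho, hor, ⟨r, hr, Ne.symm hor⟩, ?_⟩
  rintro a ⟨ha, hao⟩ b ⟨hb, hbo⟩
  exact (main (d a) a ha hao le_rfl).trans (rtg_symm (main (d b) b hb hbo le_rfl))

/-- Relativised 2-connectivity. -/
def TwoConnOn (G : SimpleGraph V) (s : Set V) : Prop :=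
  3 ≤ Nat.card s ∧ ConnOn G s ∧ ∀ x ∈ s, ConnOn G (s \ {x})

lemma connOn_induce_iff {G : SimpleGraph V} {s : Set V} {t : Set ↥s} :
    ConnOn (G.induce s) t ↔ ConnOn G (Subtype.val '' t) := by
  constructor
  · intro h
    refine connOn_map Subtype.val (fun y hy => ⟨y, hy, rfl⟩) ?_ ?_ h
    · rintro w ⟨z, hz, rfl⟩; exact ⟨z, hz, rfl⟩
    · intro a b ha hb hadj
      exact Or.inl (by simpa using hadj)
  · intro h
    classical
    obtain ⟨⟨x0, ⟨z0, hz0, rfl⟩⟩, -⟩ := id h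
    refine connOn_map (fun y => if h : y ∈ s then (⟨y, h⟩ : ↥s) else z0) ?_ ?_ ?_ h
    · rintro y ⟨z, hz, rfl⟩
      simp only [z.2, dif_pos]
      convert hz <;> simp
    · intro w hw
      exact ⟨w.1, ⟨w, hw, rfl⟩, by simp [w.2]⟩
    · rintro a b ⟨za, hza, rfl⟩ ⟨zb, hzb, rfl⟩ hadj
      left
      simp only [za.2, zb.2, dif_pos]
      simpa using hadj

lemma val_image_compl_singleton {s : Set V} (v : ↥s) :
    Subtype.val '' ({v}ᶜ : Set ↥s) = s \ {v.1} := by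
  ext x
  constructor
  · rintro ⟨z, hz, rfl⟩
    exact ⟨z.2, fun h => hz (Subtype.ext h)⟩
  · rintro ⟨hx, hxv⟩
    exact ⟨⟨x, hx⟩, fun h => hxv (by simpa [Subtype.ext_iff] using h), rfl⟩

lemma twoConnected_induce_iff [Fintype V] {G : SimpleGraph V} {s : Set V} [Fintype ↥s] :
    TwoConnected (G.induce s) ↔ TwoConnOn G s := by
  unfold TwoConnected TwoConnOn
  rw [← Nat.card_eq_fintype_card, induce_connected_iff]
  refine and_congr Iff.rfl (and_congr Iff.rfl ?_)
  constructor
  · intro h x hx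
    have := connOn_induce_iff.1 (induce_connected_iff.1 (h ⟨x, hx⟩))
    rwa [val_image_compl_singleton] at this
  · intro h v
    rw [induce_connected_iff, connOn_induce_iff, val_image_compl_singleton]
    exact h v.1 v.2

lemma compl_induce_eq {G : SimpleGraph V} {s : Set V} :
    (G.induce s)ᶜ = Gᶜ.induce s := by
  ext a b
  simp [SimpleGraph.compl_adj, Subtype.ext_iff]

lemma isTwoCograph_elim {V : Type} [Fintype V] {G : SimpleGraph V} {s : Set V}
    (h : IsTwoCograph G) (h1 : TwoConnOn G s) (h2 : TwoConnOn Gᶜ s) : False := by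
  classical
  have hfin : s.Finite := Set.toFinite s
  have hcoe : (hfin.toFinset : Set V) = s := hfin.coe_toFinset
  refine h hfin.toFinset ⟨twoConnected_induce_iff.2 ?_, ?_⟩
  · rw [hcoe]; exact h1
  · rw [compl_induce_eq]
    exact twoConnected_induce_iff.2 (by rw [hcoe]; exact h2)

lemma exists_witness_of_not_isTwoCograph {V : Type} [Fintype V] {G : SimpleGraph V}
    (h : ¬ IsTwoCograph G) : ∃ S : Finset V, TwoConnOn G ↑S ∧ TwoConnOn Gᶜ ↑S := by
  unfold IsTwoCograph at h
  push_neg at h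
  obtain ⟨S, h1, h2⟩ := h
  rw [compl_induce_eq] at h2
  exact ⟨S, twoConnected_induce_iff.1 h1, twoConnected_induce_iff.1 h2⟩

lemma twoConnOn_univ_induce {G : SimpleGraph V} {s : Set V} (h : TwoConnOn G s) :
    TwoConnOn (G.induce s) Set.univ := by
  obtain ⟨hcard, hconn, hdel⟩ := h
  refine ⟨?_, ?_, ?_⟩
  · rwa [Nat.card_congr (Equiv.Set.univ _)]
  · rw [connOn_induce_iff]
    simpa using hconn
  · intro x _
    rw [show (Set.univ \ {x} : Set ↥s) = ({x}ᶜ : Set ↥s) by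
      rw [Set.compl_eq_univ_diff]]
    rw [connOn_induce_iff, val_image_compl_singleton]
    exact hdel x.1 x.2

lemma singleton_connOn {G : SimpleGraph V} (x : V) : ConnOn G {x} := by
  refine ⟨⟨x, rfl⟩, ?_⟩
  intro a ha b hb
  rw [Set.mem_singleton_iff] at ha hb
  subst ha; subst hb
  exact ReflTransGen.refl

lemma pair_connOn {G : SimpleGraph V} {x y : V} (h : G.Adj x y) : ConnOn G {x, y} := by
  refine ⟨⟨x, Or.inl rfl⟩, ?_⟩
  intro a ha b hb
  simp only [Set.mem_insert_iff, Set.mem_singleton_iff] at ha hb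
  have hx : x ∈ ({x, y} : Set V) := Or.inl rfl
  have hy : y ∈ ({x, y} : Set V) := Or.inr rfl
  rcases ha with rfl | rfl <;> rcases hb with rfl | rfl
  · exact ReflTransGen.refl
  · exact ReflTransGen.single ⟨hx, hy, h⟩
  · exact ReflTransGen.single ⟨hy, hx, h.symm⟩
  · exact ReflTransGen.refl

lemma isInducedMinor_induce (G : SimpleGraph V) (s : Set V) :
    IsInducedMinor G (G.induce s) := by
  refine ⟨fun w => {w.1}, fun w => ⟨w.1, rfl⟩, ?_, ?_, ?_⟩
  · intro w
    exact induce_connected_iff.2 (singleton_connOn w.1)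
  · intro w w' hne
    rw [Set.disjoint_singleton_left, Set.mem_singleton_iff]
    exact fun h => hne (Subtype.ext h)
  · intro w w' _
    simp

/-- The graph obtained from `G` by contracting the edge `x y` (into the vertex `x`),
with vertex set `{w // w ≠ y}`. -/
def CG (G : SimpleGraph V) (x y : V) : SimpleGraph {w : V // w ≠ y} where
  Adj a b := a.1 ≠ b.1 ∧
    (G.Adj a.1 b.1 ∨ (a.1 = x ∧ G.Adj y b.1) ∨ (b.1 = x ∧ G.Adj a.1 y))
  symm := by
    constructor
    rintro a b ⟨h1, h2 | ⟨h2, h3⟩ | ⟨h2, h3⟩⟩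
    · exact ⟨h1.symm, Or.inl h2.symm⟩
    · exact ⟨h1.symm, Or.inr (Or.inr ⟨h2, h3.symm⟩)⟩
    · exact ⟨h1.symm, Or.inr (Or.inl ⟨h2, h3.symm⟩)⟩
  loopless := ⟨fun a => by simp⟩

lemma isInducedMinor_CG {G : SimpleGraph V} {x y : V} (hxy : G.Adj x y) :
    IsInducedMinor G (CG G x y) := by
  classical
  have hne : x ≠ y := hxy.ne
  refine ⟨fun w => if w.1 = x then {x, y} else {w.1}, ?_, ?_, ?_, ?_⟩
  · intro w
    dsimp only
    split
    · exact ⟨x, Or.inl rfl⟩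
    · exact ⟨w.1, rfl⟩
  · intro w
    dsimp only
    rcases eq_or_ne w.1 x with hw | hw
    · rw [if_pos hw]
      exact induce_connected_iff.2 (pair_connOn hxy)
    · rw [if_neg hw]
      exact induce_connected_iff.2 (singleton_connOn w.1)
  · intro w w' hww
    have hvv : w.1 ≠ w'.1 := fun h => hww (Subtype.ext h)
    dsimp only
    split_ifs with h1 h2 h2
    · exact absurd (h1.trans h2.symm) hvv
    · rw [Set.disjoint_left]
      rintro z (rfl | rfl) hz2 <;> rw [Set.mem_singleton_iff] at hz2
      · exact h2 hz2.symm
      · exact w'.2 hz2.symm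
    · rw [Set.disjoint_left]
      rintro z hz1 (rfl | rfl) <;> rw [Set.mem_singleton_iff] at hz1
      · exact h1 hz1.symm
      · exact w.2 hz1.symm
    · rw [Set.disjoint_singleton_left, Set.mem_singleton_iff]
      exact hvv
  · intro w w' hww
    have hvv : w.1 ≠ w'.1 := fun h => hww (Subtype.ext h)
    show (_ ∧ _) ↔ _
    dsimp only
    split_ifs with h1 h2 h2
    all_goals simp only [Set.mem_insert_iff, Set.mem_singleton_iff]
    · exact absurd (h1.trans h2.symm) hvv
    · subst h1
      constructor
      · rintro ⟨-, hadj | ⟨-, hadj⟩ | ⟨hx, -⟩⟩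
        · exact ⟨w.1, Or.inl rfl, w'.1, rfl, hadj⟩
        · exact ⟨y, Or.inr rfl, w'.1, rfl, hadj⟩
        · exact absurd hx h2
      · rintro ⟨a, ha, b, rfl, hadj⟩
        rcases ha with rfl | rfl
        · exact ⟨hvv, Or.inl hadj⟩
        · exact ⟨hvv, Or.inr (Or.inl ⟨rfl, hadj⟩)⟩
    · subst h2
      constructor
      · rintro ⟨-, hadj | ⟨hx, -⟩ | ⟨-, hadj⟩⟩
        · exact ⟨w.1, rfl, w'.1, Or.inl rfl, hadj⟩
        · exact absurd hx h1
        · exact ⟨w.1, rfl, y, Or.inr rfl, hadj⟩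
      · rintro ⟨a, rfl, b, hb, hadj⟩
        rcases hb with rfl | rfl
        · exact ⟨hvv, Or.inl hadj⟩
        · exact ⟨hvv, Or.inr (Or.inr ⟨rfl, hadj⟩)⟩
    · constructor
      · rintro ⟨-, hadj | ⟨hx, -⟩ | ⟨hx, -⟩⟩
        · exact ⟨w.1, rfl, w'.1, rfl, hadj⟩
        · exact absurd hx h1
        · exact absurd hx h2
      · rintro ⟨a, rfl, b, rfl, hadj⟩
        exact ⟨hvv, Or.inl hadj⟩


lemma rtg_first_step {G : SimpleGraph V} {s : Set V} {a b : V}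
    (h : ReflTransGen (StepOn G s) a b) (hab : a ≠ b) : ∃ c, G.Adj a c := by
  rcases h.cases_head with rfl | ⟨c, hc, -⟩
  · exact absurd rfl hab
  · exact ⟨c, hc.2.2⟩

lemma nbr_char [Fintype V] [DecidableEq V] {G : SimpleGraph V} [DecidableRel G.Adj]
    {x a b : V} (hdeg : G.degree x = 2) (hab : a ≠ b) (ha : G.Adj x a) (hb : G.Adj x b) :
    ∀ w, G.Adj x w ↔ w = a ∨ w = b := by
  have hsub : ({a, b} : Finset V) ⊆ G.neighborFinset x := by
    intro z hz
    rw [Finset.mem_insert, Finset.mem_singleton] at hz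
    rcases hz with rfl | rfl <;> rwa [SimpleGraph.mem_neighborFinset]
  have hcard : ({a, b} : Finset V).card = 2 := Finset.card_pair hab
  have heq : ({a, b} : Finset V) = G.neighborFinset x := by
    apply Finset.eq_of_subset_of_card_le hsub
    rw [hcard]
    exact le_of_eq hdeg
  intro w
  rw [← SimpleGraph.mem_neighborFinset, ← heq, Finset.mem_insert, Finset.mem_singleton]

lemma getVert_inj {G : SimpleGraph V} {u v : V} {p : G.Walk u v} (hpath : p.IsPath) :
    ∀ i j, i ≤ p.length → j ≤ p.length → p.getVert i = p.getVert j → i = j := by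
  induction p with
  | nil =>
      intro i j hi hj _
      simp only [SimpleGraph.Walk.length_nil, Nat.le_zero] at hi hj
      omega
  | @cons a b c hadj q ih =>
      rw [SimpleGraph.Walk.cons_isPath_iff] at hpath
      intro i j hi hj hij
      rw [SimpleGraph.Walk.length_cons] at hi hj
      match i, j with
      | 0, 0 => rfl
      | 0, (j + 1) =>
          exfalso
          rw [SimpleGraph.Walk.getVert_zero, SimpleGraph.Walk.getVert_cons_succ] at hij
          exact hpath.2 (SimpleGraph.Walk.mem_support_iff_exists_getVert.2
            ⟨j, hij.symm, by omega⟩)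
      | (i + 1), 0 =>
          exfalso
          rw [SimpleGraph.Walk.getVert_zero, SimpleGraph.Walk.getVert_cons_succ] at hij
          exact hpath.2 (SimpleGraph.Walk.mem_support_iff_exists_getVert.2
            ⟨i, hij, by omega⟩)
      | (i + 1), (j + 1) =>
          rw [SimpleGraph.Walk.getVert_cons_succ, SimpleGraph.Walk.getVert_cons_succ] at hij
          have := ih hpath.1 i j (by omega) (by omega) hij
          omega

/-- The contraction machine. -/
lemma contr_machine {V : Type} [Fintype V] [DecidableEq V] (G : SimpleGraph V)
    (hmin : ∀ (W : Type) [Fintype W], ∀ H : SimpleGraph W,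
      IsInducedMinor G H → Fintype.card W < Fintype.card V → IsTwoCograph H)
    (a0 a1 a2 a3 a4 : V)
    (d01 : a0 ≠ a1) (d02 : a0 ≠ a2) (d03 : a0 ≠ a3) (d04 : a0 ≠ a4)
    (d12 : a1 ≠ a2) (d13 : a1 ≠ a3) (d14 : a1 ≠ a4)
    (d23 : a2 ≠ a3) (d24 : a2 ≠ a4) (d34 : a3 ≠ a4)
    (h1 : ∀ w, G.Adj a1 w ↔ w = a0 ∨ w = a2)
    (h2 : ∀ w, G.Adj a2 w ↔ w = a1 ∨ w = a3)
    (h3 : ∀ w, G.Adj a3 w ↔ w = a2 ∨ w = a4)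
    (hcard : 6 ≤ Fintype.card V)
    (hD0 : ∃ w, w ≠ a0 ∧ w ≠ a1 ∧ w ≠ a2 ∧ w ≠ a3 ∧ ¬ G.Adj a0 w)
    (hD4 : ∃ w, w ≠ a1 ∧ w ≠ a2 ∧ w ≠ a3 ∧ w ≠ a4 ∧ ¬ G.Adj a4 w)
    (hg : TwoConnOn G Set.univ) : False := by
  classical
  obtain ⟨w0, hw00, hw01, hw02, hw03, hw0n⟩ := hD0
  obtain ⟨w4, hw41, hw42, hw43, hw44, hw4n⟩ := hD4
  have h12' : G.Adj a1 a2 := (h1 a2).2 (Or.inr rfl)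
  set H := CG G a1 a2 with hH
  set z : {w : V // w ≠ a2} := ⟨a1, d12⟩ with hz
  set A0 : {w : V // w ≠ a2} := ⟨a0, d02⟩ with hA0
  set A3 : {w : V // w ≠ a2} := ⟨a3, Ne.symm d23⟩ with hA3
  set A4 : {w : V // w ≠ a2} := ⟨a4, Ne.symm d24⟩ with hA4
  set W0 : {w : V // w ≠ a2} := ⟨w0, hw02⟩ with hW0
  set W4 : {w : V // w ≠ a2} := ⟨w4, hw42⟩ with hW4
  have cW : Fintype.card {w : V // w ≠ a2} = Fintype.card V - 1 := by
    have hc := Fintype.card_subtype_compl (fun w : V => w = a2)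
    rw [Fintype.card_subtype_eq] at hc
    exact hc
  have hcog : IsTwoCograph H :=
    hmin _ H (isInducedMinor_CG h12') (by rw [cW]; omega)
  -- adjacency characterisations in H
  have hzadj : ∀ w : {w : V // w ≠ a2}, H.Adj z w ↔ (w.1 = a0 ∨ w.1 = a3) := by
    intro w
    constructor
    · rintro ⟨hne, hGa | ⟨-, hGa⟩ | ⟨hw, -⟩⟩
      · rcases (h1 w.1).1 hGa with h | h
        · exact Or.inl h
        · exact absurd h w.2
      · rcases (h2 w.1).1 hGa with h | h
        · exact absurd h.symm hne
        · exact Or.inr h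
      · exact absurd hw.symm hne
    · rintro (h | h)
      · exact ⟨by rw [h]; exact Ne.symm d01, Or.inl ((h1 w.1).2 (Or.inl h))⟩
      · exact ⟨by rw [h]; exact d13, Or.inr (Or.inl ⟨rfl, (h2 w.1).2 (Or.inr h)⟩)⟩
  have hnadj : ∀ s t : {w : V // w ≠ a2}, s.1 ≠ a1 → t.1 ≠ a1 →
      (H.Adj s t ↔ G.Adj s.1 t.1) := by
    intro s t hs ht
    constructor
    · rintro ⟨-, hGa | ⟨h, -⟩ | ⟨h, -⟩⟩
      · exact hGa
      · exact absurd h hs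
      · exact absurd h ht
    · intro hGa
      exact ⟨hGa.ne, Or.inl hGa⟩
  -- transport map
  set φ : V → {w : V // w ≠ a2} := fun y => if h : y = a2 then z else ⟨y, h⟩ with hφdef
  have hφa2 : φ a2 = z := dif_pos rfl
  have hφne : ∀ y (h : y ≠ a2), φ y = ⟨y, h⟩ := fun y h => dif_neg h
  have hφeta : ∀ w : {w : V // w ≠ a2}, φ w.1 = w := by
    intro w
    rw [hφne w.1 w.2]
  have hφstep : ∀ y y', G.Adj y y' → H.Adj (φ y) (φ y') ∨ φ y = φ y' := by
    intro y y' hadj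
    by_cases hy : y = a2 <;> by_cases hy' : y' = a2
    · subst hy; subst hy'; exact absurd hadj (G.irrefl)
    · subst hy
      rw [hφa2, hφne y' hy']
      rcases (h2 y').1 hadj with h | h
      · exact Or.inr (Subtype.ext h.symm)
      · exact Or.inl ((hzadj _).2 (Or.inr h))
    · subst hy'
      rw [hφa2, hφne y hy]
      rcases (h2 y).1 hadj.symm with h | h
      · exact Or.inr (Subtype.ext h)
      · exact Or.inl (((hzadj _).2 (Or.inr h)).symm)
    · rw [hφne y hy, hφne y' hy']
      exact Or.inl ⟨hadj.ne, Or.inl hadj⟩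
  -- H is 2-connected
  have hHcard : 3 ≤ Nat.card ↥(Set.univ : Set {w : V // w ≠ a2}) := by
    rw [Nat.card_congr (Equiv.Set.univ _), Nat.card_eq_fintype_card, cW]
    omega
  have hHconn : ConnOn H Set.univ := by
    refine connOn_map φ (fun y _ => Set.mem_univ _) (fun w _ => ⟨w.1, Set.mem_univ _, hφeta w⟩)
      (fun y y' _ _ h => hφstep y y' h) hg.2.1
  have hHdel : ∀ x : {w : V // w ≠ a2}, ConnOn H (Set.univ \ {x}) := by
    intro x
    by_cases hxz : x = z
    · subst hxz
      have step1 : ConnOn G ((Set.univ \ {a1}) \ {a2}) := by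
        refine connOn_erase_leaf (hg.2.2 a1 (Set.mem_univ _)) (c := a3)
          ⟨Set.mem_univ _, Ne.symm d13⟩ (Ne.symm d23) ?_
        rintro t ⟨-, ht⟩ hadj
        rcases (h2 t).1 hadj with h | h
        · exact absurd h ht
        · exact h
      refine connOn_map φ ?_ ?_ (fun y y' _ _ h => hφstep y y' h) step1
      · rintro y ⟨⟨-, hy1⟩, hy2⟩
        have hy2' : y ≠ a2 := hy2
        rw [hφne y hy2']
        exact ⟨Set.mem_univ _, fun h => hy1 (congrArg Subtype.val h)⟩
      · rintro w ⟨-, hw⟩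
        refine ⟨w.1, ⟨⟨Set.mem_univ _, fun h => hw (Subtype.ext h)⟩, w.2⟩, hφeta w⟩
    · refine connOn_map φ ?_ ?_ (fun y y' _ _ h => hφstep y y' h) (hg.2.2 x.1 (Set.mem_univ _))
      · rintro y ⟨-, hy1⟩
        by_cases hy : y = a2
        · subst hy
          rw [hφa2]
          exact ⟨Set.mem_univ _, fun h => hxz h.symm⟩
        · rw [hφne y hy]
          exact ⟨Set.mem_univ _, fun h => hy1 (show y = x.1 from congrArg Subtype.val h)⟩
      · rintro w ⟨-, hw⟩
        exact ⟨w.1, ⟨Set.mem_univ _, fun h => hw (Subtype.ext h)⟩, hφeta w⟩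
  have hHtc : TwoConnOn H Set.univ :=
    ⟨hHcard, hHconn, fun x _ => by
      have := hHdel x
      rwa [show (Set.univ \ {x} : Set {w : V // w ≠ a2}) = Set.univ \ {x} from rfl] at this⟩
  -- complement edges
  have mkE : ∀ {s t : {w : V // w ≠ a2}}, s.1 ≠ t.1 → ¬ H.Adj s t → Hᶜ.Adj s t := by
    intro s t h1' h2'
    exact ⟨fun he => h1' (congrArg Subtype.val he), h2'⟩
  have eZ : ∀ w : {w : V // w ≠ a2}, w ≠ z → w.1 ≠ a0 → w.1 ≠ a3 → Hᶜ.Adj w z := by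
    intro w hwz hw0 hw3
    refine mkE (fun h => hwz (Subtype.ext h)) ?_
    intro h
    rcases (hzadj w).1 h.symm with h' | h'
    · exact hw0 h'
    · exact hw3 h'
  have e3 : ∀ w : {w : V // w ≠ a2}, w.1 ≠ a1 → w.1 ≠ a3 → w.1 ≠ a4 → Hᶜ.Adj A3 w := by
    intro w hw1 hw3 hw4
    refine mkE (fun h => hw3 h.symm) ?_
    intro h
    rcases (h3 w.1).1 ((hnadj A3 w d13.symm hw1).1 h) with h' | h'
    · exact w.2 h'
    · exact hw4 h'
  have e30 : Hᶜ.Adj A3 A0 := e3 A0 d01 d03 d04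
  have e0 : ∀ w : {w : V // w ≠ a2}, w.1 ≠ a1 → w.1 ≠ a0 → ¬ G.Adj a0 w.1 → Hᶜ.Adj A0 w := by
    intro w hw1 hw0 hwn
    refine mkE (fun h => hw0 h.symm) ?_
    intro h
    exact hwn ((hnadj A0 w d01 hw1).1 h)
  have hextra : ∃ y : V, y ≠ a0 ∧ y ≠ a1 ∧ y ≠ a2 ∧ y ≠ a3 ∧ y ≠ a4 := by
    by_contra hco
    push_neg at hco
    have hsub : (Finset.univ : Finset V) ⊆ {a0, a1, a2, a3, a4} := by
      intro y _
      simp only [Finset.mem_insert, Finset.mem_singleton]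
      by_cases hy0 : y = a0
      · exact Or.inl hy0
      by_cases hy1 : y = a1
      · exact Or.inr (Or.inl hy1)
      by_cases hy2 : y = a2
      · exact Or.inr (Or.inr (Or.inl hy2))
      by_cases hy3 : y = a3
      · exact Or.inr (Or.inr (Or.inr (Or.inl hy3)))
      exact Or.inr (Or.inr (Or.inr (Or.inr (hco y hy0 hy1 hy2 hy3))))
    have hle : Fintype.card V ≤ 5 := by
      calc Fintype.card V = (Finset.univ : Finset V).card := Finset.card_univ.symm
        _ ≤ ({a0, a1, a2, a3, a4} : Finset V).card := Finset.card_le_card hsub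
        _ ≤ 5 := by
            apply le_trans (Finset.card_insert_le _ _)
            apply Nat.succ_le_succ
            apply le_trans (Finset.card_insert_le _ _)
            apply Nat.succ_le_succ
            apply le_trans (Finset.card_insert_le _ _)
            apply Nat.succ_le_succ
            apply le_trans (Finset.card_insert_le _ _)
            apply Nat.succ_le_succ
            simp
    omega
  -- complement connectivity
  have hCuniv : ConnOn Hᶜ Set.univ := by
    obtain ⟨y, hy0, hy1, hy2, hy3, hy4⟩ := hextra
    set M : {w : V // w ≠ a2} := ⟨y, hy2⟩ with hM
    have routeM : ReflTransGen (StepOn Hᶜ Set.univ) M z :=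
      ReflTransGen.single ⟨Set.mem_univ _, Set.mem_univ _,
        eZ M (fun h => hy1 (congrArg Subtype.val h)) hy0 hy3⟩
    have routeA3 : ReflTransGen (StepOn Hᶜ Set.univ) A3 z :=
      ReflTransGen.head ⟨Set.mem_univ _, Set.mem_univ _, e3 M hy1 hy3 hy4⟩ routeM
    have routeA0 : ReflTransGen (StepOn Hᶜ Set.univ) A0 z :=
      ReflTransGen.head ⟨Set.mem_univ _, Set.mem_univ _, e30.symm⟩ routeA3
    refine ⟨⟨z, Set.mem_univ _⟩, ?_⟩
    have hub : ∀ w : {w : V // w ≠ a2}, ReflTransGen (StepOn Hᶜ Set.univ) w z := by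
      intro w
      by_cases hwz : w = z
      · exact hwz ▸ ReflTransGen.refl
      by_cases hw0 : w.1 = a0
      · rw [show w = A0 from Subtype.ext hw0]
        exact routeA0
      by_cases hw3 : w.1 = a3
      · rw [show w = A3 from Subtype.ext hw3]
        exact routeA3
      · exact ReflTransGen.single ⟨Set.mem_univ _, Set.mem_univ _, eZ w hwz hw0 hw3⟩
    intro a _ b _
    exact (hub a).trans (rtg_symm (hub b))
  have hCdel : ∀ x : {w : V // w ≠ a2}, ConnOn Hᶜ (Set.univ \ {x}) := by
    intro x
    by_cases hxz : x = z
    · -- delete the contracted vertex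
      subst hxz
      have hm : ∀ m : {w : V // w ≠ a2}, m ≠ z → m ∈ (Set.univ \ {z} : Set _) :=
        fun m h => ⟨Set.mem_univ _, h⟩
      have hA3m : A3 ∈ (Set.univ \ {z} : Set _) := hm A3 (fun h => d13 (congrArg Subtype.val h).symm)
      refine ⟨⟨A3, hA3m⟩, ?_⟩
      have hub : ∀ w, w ∈ (Set.univ \ {z} : Set _) →
          ReflTransGen (StepOn Hᶜ (Set.univ \ {z})) w A3 := by
        rintro w ⟨-, hwz'⟩
        have hwz : w ≠ z := hwz'
        have hw1 : w.1 ≠ a1 := fun h => hwz (Subtype.ext h)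
        by_cases hw3 : w.1 = a3
        · rw [show w = A3 from Subtype.ext hw3]
        by_cases hw4 : w.1 = a4
        · rw [show w = A4 from Subtype.ext hw4]
          have hW4z : W4 ≠ z := fun h => hw41 (congrArg Subtype.val h)
          refine ReflTransGen.head ⟨hm A4 (fun h => d14 (congrArg Subtype.val h).symm),
            hm W4 hW4z, ?_⟩ (ReflTransGen.single ⟨hm W4 hW4z, hA3m, (e3 W4 hw41 hw43 hw44).symm⟩)
          exact mkE (fun h => hw44 h.symm) (fun h => hw4n ((hnadj A4 W4 (Ne.symm d14) hw41).1 h))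
        · exact ReflTransGen.single ⟨hm w hwz, hA3m, (e3 w hw1 hw3 hw4).symm⟩
      intro a ha b hb
      exact (hub a ha).trans (rtg_symm (hub b hb))
    · -- delete an ordinary vertex
      have hzs : z ∈ (Set.univ \ {x} : Set _) := ⟨Set.mem_univ _, fun h => hxz h.symm⟩
      have hm : ∀ m : {w : V // w ≠ a2}, m ≠ x → m ∈ (Set.univ \ {x} : Set _) :=
        fun m h => ⟨Set.mem_univ _, h⟩
      have routeA3 : A3 ≠ x → ReflTransGen (StepOn Hᶜ (Set.univ \ {x})) A3 z := by
        intro hA3x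
        by_cases hex : ∃ m : {w : V // w ≠ a2}, m ≠ x ∧ m ≠ z ∧ m.1 ≠ a0 ∧ m.1 ≠ a3 ∧ m.1 ≠ a4
        · obtain ⟨m, hmx, hmz, hm0, hm3, hm4⟩ := hex
          have hm1 : m.1 ≠ a1 := fun h => hmz (Subtype.ext h)
          exact ReflTransGen.head ⟨hm A3 hA3x, hm m hmx, e3 m hm1 hm3 hm4⟩
            (ReflTransGen.single ⟨hm m hmx, hzs, eZ m hmz hm0 hm3⟩)
        · push_neg at hex
          have hall : ∀ y : V, y = a0 ∨ y = a1 ∨ y = a2 ∨ y = a3 ∨ y = a4 ∨ y = x.1 := by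
            intro y
            by_cases hy2 : y = a2
            · exact Or.inr (Or.inr (Or.inl hy2))
            by_cases hyz : (⟨y, hy2⟩ : {w : V // w ≠ a2}) = z
            · exact Or.inr (Or.inl (congrArg Subtype.val hyz))
            by_cases hyx : (⟨y, hy2⟩ : {w : V // w ≠ a2}) = x
            · exact Or.inr (Or.inr (Or.inr (Or.inr (Or.inr (congrArg Subtype.val hyx)))))
            by_cases hy0 : y = a0
            · exact Or.inl hy0
            by_cases hy3 : y = a3
            · exact Or.inr (Or.inr (Or.inr (Or.inl hy3)))
            exact Or.inr (Or.inr (Or.inr (Or.inr (Or.inl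
              (hex ⟨y, hy2⟩ hyx hyz hy0 hy3)))))
          have hsmall : ¬ (x.1 = a0 ∨ x.1 = a1 ∨ x.1 = a2 ∨ x.1 = a3 ∨ x.1 = a4) := by
            intro hx
            have hsub2 : (Finset.univ : Finset V) ⊆ {a0, a1, a2, a3, a4} := by
              intro y _
              simp only [Finset.mem_insert, Finset.mem_singleton]
              rcases hall y with h | h | h | h | h | h
              · exact Or.inl h
              · exact Or.inr (Or.inl h)
              · exact Or.inr (Or.inr (Or.inl h))
              · exact Or.inr (Or.inr (Or.inr (Or.inl h)))
              · exact Or.inr (Or.inr (Or.inr (Or.inr h)))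
              · rw [h]; exact hx
            have hle : Fintype.card V ≤ 5 := by
              calc Fintype.card V = (Finset.univ : Finset V).card := Finset.card_univ.symm
                _ ≤ ({a0, a1, a2, a3, a4} : Finset V).card := Finset.card_le_card hsub2
                _ ≤ 5 := by
                    apply le_trans (Finset.card_insert_le _ _)
                    apply Nat.succ_le_succ
                    apply le_trans (Finset.card_insert_le _ _)
                    apply Nat.succ_le_succ
                    apply le_trans (Finset.card_insert_le _ _)
                    apply Nat.succ_le_succ
                    apply le_trans (Finset.card_insert_le _ _)
                    apply Nat.succ_le_succ
                    simp
            omega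
          have hx0 : x.1 ≠ a0 := fun h => hsmall (Or.inl h)
          have hx4 : x.1 ≠ a4 := fun h => hsmall (Or.inr (Or.inr (Or.inr (Or.inr h))))
          have hA0x : A0 ≠ x := fun h => hx0 (congrArg Subtype.val h).symm
          have hA4x : A4 ≠ x := fun h => hx4 (congrArg Subtype.val h).symm
          have hA4z : A4 ≠ z := fun h => d14 (congrArg Subtype.val h).symm
          have routeA4z : ReflTransGen (StepOn Hᶜ (Set.univ \ {x})) A4 z :=
            ReflTransGen.single ⟨hm A4 hA4x, hzs, eZ A4 hA4z (Ne.symm d04) (Ne.symm d34)⟩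
          have main : ¬ G.Adj a0 a4 → ReflTransGen (StepOn Hᶜ (Set.univ \ {x})) A3 z := by
            intro hn04
            exact ReflTransGen.head ⟨hm A3 hA3x, hm A0 hA0x, e30⟩
              (ReflTransGen.head ⟨hm A0 hA0x, hm A4 hA4x,
                e0 A4 (Ne.symm d14) (Ne.symm d04) hn04⟩ routeA4z)
          have hw0case : w0 = a4 ∨ w0 = x.1 := by
            rcases hall w0 with h | h | h | h | h | h
            · exact absurd h hw00
            · exact absurd h hw01
            · exact absurd h hw02
            · exact absurd h hw03
            · exact Or.inl h
            · exact Or.inr h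
          rcases hw0case with hw0a4 | hw0x
          · refine main ?_
            rw [← hw0a4]
            exact hw0n
          · have hw4case : w4 = a0 ∨ w4 = x.1 := by
              rcases hall w4 with h | h | h | h | h | h
              · exact Or.inl h
              · exact absurd h hw41
              · exact absurd h hw42
              · exact absurd h hw43
              · exact absurd h hw44
              · exact Or.inr h
            rcases hw4case with hw4a0 | hw4x
            · refine main ?_
              intro h
              have hn40 : ¬ G.Adj a4 a0 := by rw [← hw4a0]; exact hw4n
              exact hn40 h.symm
            · exfalso
              have hrtg := hg.2.1.2 x.1 (Set.mem_univ _) a0 (Set.mem_univ _)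
              obtain ⟨c, hc⟩ := rtg_first_step hrtg hx0
              rcases hall c with h | h | h | h | h | h
              · subst h
                rw [← hw0x] at hc
                exact hw0n hc.symm
              · subst h
                rcases (h1 x.1).1 hc.symm with h' | h'
                · exact hx0 h'
                · exact hsmall (Or.inr (Or.inr (Or.inl h')))
              · subst h
                rcases (h2 x.1).1 hc.symm with h' | h'
                · exact hsmall (Or.inr (Or.inl h'))
                · exact hsmall (Or.inr (Or.inr (Or.inr (Or.inl h'))))
              · subst h
                rcases (h3 x.1).1 hc.symm with h' | h'
                · exact hsmall (Or.inr (Or.inr (Or.inl h')))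
                · exact hx4 h'
              · subst h
                rw [← hw4x] at hc
                exact hw4n hc.symm
              · rw [h] at hc
                exact G.irrefl hc
      have key : ∀ w, w ∈ (Set.univ \ {x} : Set _) →
          ReflTransGen (StepOn Hᶜ (Set.univ \ {x})) w z := by
        rintro w ⟨-, hwx'⟩
        have hwx : w ≠ x := hwx'
        by_cases hwz : w = z
        · exact hwz ▸ ReflTransGen.refl
        by_cases hw0 : w.1 = a0
        · rw [show w = A0 from Subtype.ext hw0] at hwx ⊢
          by_cases hA3x : A3 = x
          · have hW0x : W0 ≠ x := fun h => hw03 ((congrArg Subtype.val h).trans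
              (congrArg Subtype.val hA3x.symm))
            have hW0z : W0 ≠ z := fun h => hw01 (congrArg Subtype.val h)
            exact ReflTransGen.head ⟨hm A0 hwx, hm W0 hW0x, e0 W0 hw01 hw00 hw0n⟩
              (ReflTransGen.single ⟨hm W0 hW0x, hzs, eZ W0 hW0z hw00 hw03⟩)
          · exact ReflTransGen.head ⟨hm A0 hwx, hm A3 hA3x, e30.symm⟩ (routeA3 hA3x)
        by_cases hw3 : w.1 = a3
        · rw [show w = A3 from Subtype.ext hw3] at hwx ⊢
          exact routeA3 hwx
        · exact ReflTransGen.single ⟨hm w hwx, hzs, eZ w hwz hw0 hw3⟩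
      refine ⟨⟨z, hzs⟩, ?_⟩
      intro a ha b hb
      exact (key a ha).trans (rtg_symm (key b hb))
  have hCtc : TwoConnOn Hᶜ Set.univ := ⟨by
      rw [Nat.card_congr (Equiv.Set.univ _), Nat.card_eq_fintype_card, cW]; omega,
    hCuniv, fun x _ => hCdel x⟩
  exact isTwoCograph_elim hcog hHtc hCtc

/-- The deletion machine. -/
lemma del_machine {V : Type} [Fintype V] [DecidableEq V] (G : SimpleGraph V)
    (hmin : ∀ (W : Type) [Fintype W], ∀ H : SimpleGraph W,
      IsInducedMinor G H → Fintype.card W < Fintype.card V → IsTwoCograph H)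
    (a0 a1 a2 a3 a4 : V)
    (d01 : a0 ≠ a1) (d02 : a0 ≠ a2) (d03 : a0 ≠ a3) (d04 : a0 ≠ a4)
    (d12 : a1 ≠ a2) (d13 : a1 ≠ a3) (d14 : a1 ≠ a4)
    (d23 : a2 ≠ a3) (d24 : a2 ≠ a4) (d34 : a3 ≠ a4)
    (h1 : ∀ w, G.Adj a1 w ↔ w = a0 ∨ w = a2)
    (h2 : ∀ w, G.Adj a2 w ↔ w = a1 ∨ w = a3)
    (h3 : ∀ w, G.Adj a3 w ↔ w = a2 ∨ w = a4)
    (hcard : 6 ≤ Fintype.card V)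
    (hbig : ∀ w, w ≠ a0 → w ≠ a1 → w ≠ a2 → w ≠ a3 → w ≠ a4 → G.Adj a0 w)
    (h04 : G.Adj a0 a4)
    (hg : TwoConnOn G Set.univ) : False := by
  classical
  -- path edges
  have e01 : G.Adj a0 a1 := ((h1 a0).2 (Or.inl rfl)).symm
  have e12 : G.Adj a1 a2 := (h1 a2).2 (Or.inr rfl)
  have e23 : G.Adj a2 a3 := (h2 a3).2 (Or.inr rfl)
  have e34 : G.Adj a3 a4 := (h3 a4).2 (Or.inr rfl)
  -- complement edges
  have c02 : Gᶜ.Adj a0 a2 := by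
    refine ⟨d02, fun h => ?_⟩
    rcases (h2 a0).1 h.symm with h' | h'
    · exact d01 h'
    · exact d03 h'
  have c03 : Gᶜ.Adj a0 a3 := by
    refine ⟨d03, fun h => ?_⟩
    rcases (h3 a0).1 h.symm with h' | h'
    · exact d02 h'
    · exact d04 h'
  have c13 : Gᶜ.Adj a1 a3 := by
    refine ⟨d13, fun h => ?_⟩
    rcases (h1 a3).1 h with h' | h'
    · exact d03 h'.symm
    · exact d23 h'.symm
  have c14 : Gᶜ.Adj a1 a4 := by
    refine ⟨d14, fun h => ?_⟩
    rcases (h1 a4).1 h with h' | h'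
    · exact d04 h'.symm
    · exact d24 h'.symm
  have c24 : Gᶜ.Adj a2 a4 := by
    refine ⟨d24, fun h => ?_⟩
    rcases (h2 a4).1 h with h' | h'
    · exact d14 h'.symm
    · exact d34 h'.symm
  have cO1 : ∀ w, w ≠ a0 → w ≠ a1 → w ≠ a2 → Gᶜ.Adj a1 w := by
    intro w h0 h1' h2'
    refine ⟨Ne.symm h1', fun h => ?_⟩
    rcases (h1 w).1 h with h' | h'
    · exact h0 h'
    · exact h2' h'
  have cO2 : ∀ w, w ≠ a1 → w ≠ a2 → w ≠ a3 → Gᶜ.Adj a2 w := by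
    intro w h1' h2' h3'
    refine ⟨Ne.symm h2', fun h => ?_⟩
    rcases (h2 w).1 h with h' | h'
    · exact h1' h'
    · exact h3' h'
  have cO3 : ∀ w, w ≠ a2 → w ≠ a3 → w ≠ a4 → Gᶜ.Adj a3 w := by
    intro w h2' h3' h4'
    refine ⟨Ne.symm h3', fun h => ?_⟩
    rcases (h3 w).1 h with h' | h'
    · exact h2' h'
    · exact h4' h'
  -- the set K of vertices away from a0,a1,a2,a3
  set K : Set V := {y : V | y ≠ a0 ∧ y ≠ a1 ∧ y ≠ a2 ∧ y ≠ a3} with hK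
  have ha4K : a4 ∈ K := ⟨Ne.symm d04, Ne.symm d14, Ne.symm d24, Ne.symm d34⟩
  have hKconn : ConnOn G K := by
    have hroute : ∀ y ∈ K, ReflTransGen (StepOn G K) y a4 := by
      intro y hy
      have hrtg := (hg.2.2 a0 (Set.mem_univ _)).2 y ⟨Set.mem_univ _, hy.1⟩ a4
        ⟨Set.mem_univ _, Ne.symm d04⟩
      have main : ∀ w, ReflTransGen (StepOn G (Set.univ \ {a0})) w a4 → w ∈ K →
          ReflTransGen (StepOn G K) w a4 := by
        intro w h
        induction h using ReflTransGen.head_induction_on with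
        | refl => exact fun _ => ReflTransGen.refl
        | @head b c hstep htail ih =>
            intro hbK
            by_cases hcK : c ∈ K
            · exact ReflTransGen.head ⟨hbK, hcK, hstep.2.2⟩ (ih hcK)
            · simp only [hK, Set.mem_setOf_eq, not_and_or, not_not] at hcK
              have hc0 : c ≠ a0 := hstep.2.1.2
              rcases hcK with h' | h' | h' | h'
              · exact absurd h' hc0
              · subst h'
                rcases (h1 b).1 hstep.2.2.symm with h'' | h''
                · exact absurd h'' hbK.1
                · exact absurd h'' hbK.2.2.1
              · subst h'
                rcases (h2 b).1 hstep.2.2.symm with h'' | h''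
                · exact absurd h'' hbK.2.1
                · exact absurd h'' hbK.2.2.2
              · subst h'
                rcases (h3 b).1 hstep.2.2.symm with h'' | h''
                · exact absurd h'' hbK.2.2.1
                · exact h'' ▸ ReflTransGen.refl
      exact main y hrtg hy
    refine ⟨⟨a4, ha4K⟩, ?_⟩
    intro a ha b hb
    exact (hroute a ha).trans (rtg_symm (hroute b hb))
  have hextra : ∃ y : V, y ≠ a0 ∧ y ≠ a1 ∧ y ≠ a2 ∧ y ≠ a3 ∧ y ≠ a4 := by
    by_contra hco
    push_neg at hco
    have hsub : (Finset.univ : Finset V) ⊆ {a0, a1, a2, a3, a4} := by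
      intro y _
      simp only [Finset.mem_insert, Finset.mem_singleton]
      by_cases hy0 : y = a0
      · exact Or.inl hy0
      by_cases hy1 : y = a1
      · exact Or.inr (Or.inl hy1)
      by_cases hy2 : y = a2
      · exact Or.inr (Or.inr (Or.inl hy2))
      by_cases hy3 : y = a3
      · exact Or.inr (Or.inr (Or.inr (Or.inl hy3)))
      exact Or.inr (Or.inr (Or.inr (Or.inr (hco y hy0 hy1 hy2 hy3))))
    have hle : Fintype.card V ≤ 5 := by
      calc Fintype.card V = (Finset.univ : Finset V).card := Finset.card_univ.symm
        _ ≤ ({a0, a1, a2, a3, a4} : Finset V).card := Finset.card_le_card hsub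
        _ ≤ 5 := by
            apply le_trans (Finset.card_insert_le _ _)
            apply Nat.succ_le_succ
            apply le_trans (Finset.card_insert_le _ _)
            apply Nat.succ_le_succ
            apply le_trans (Finset.card_insert_le _ _)
            apply Nat.succ_le_succ
            apply le_trans (Finset.card_insert_le _ _)
            apply Nat.succ_le_succ
            simp
    omega
  obtain ⟨t, ht0, ht1, ht2, ht3, ht4⟩ := hextra
  obtain ⟨o, hoK, hoa4, hKo⟩ :=
    exists_noncut (Set.toFinite K) hKconn ha4K (x₀ := t) ⟨ht0, ht1, ht2, ht3⟩ ht4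
  have ho0 : o ≠ a0 := hoK.1
  have ho1 : o ≠ a1 := hoK.2.1
  have ho2 : o ≠ a2 := hoK.2.2.1
  have ho3 : o ≠ a3 := hoK.2.2.2
  have hao : G.Adj a0 o := hbig o ho0 ho1 ho2 ho3 hoa4
  -- the minor obtained by deleting o
  have hlt : Fintype.card ↥({o}ᶜ : Set V) < Fintype.card V := by
    have h1' : Fintype.card ↥({o}ᶜ : Set V) = ({o}ᶜ : Set V).ncard := by
      rw [← Nat.card_eq_fintype_card, Nat.card_coe_set_eq]
    have h2' : ({o}ᶜ : Set V).ncard < (Set.univ : Set V).ncard := by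
      refine Set.ncard_lt_ncard ?_ (Set.toFinite _)
      refine ⟨Set.subset_univ _, fun hsub => ?_⟩
      have : o ∈ ({o}ᶜ : Set V) := hsub (Set.mem_univ o)
      exact this rfl
    rw [h1']
    calc ({o}ᶜ : Set V).ncard < (Set.univ : Set V).ncard := h2'
      _ = Fintype.card V := by rw [Set.ncard_univ, Nat.card_eq_fintype_card]
  have hcog : IsTwoCograph (G.induce ({o}ᶜ : Set V)) :=
    hmin _ _ (isInducedMinor_induce G _) hlt
  have hmem : ∀ m : V, m ≠ o → m ∈ ({o}ᶜ : Set V) := fun m h => h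
  have hmemd : ∀ (x m : V), m ≠ o → m ≠ x → m ∈ (({o}ᶜ : Set V) \ {x}) :=
    fun x m h1' h2' => ⟨h1', h2'⟩
  have hcardc : 3 ≤ Nat.card ↥({o}ᶜ : Set V) := by
    rw [Nat.card_coe_set_eq]
    have h5 : ({a0, a1, a2, a3} : Finset V).card = 4 := by
      rw [Finset.card_insert_of_notMem (by simp [d01, d02, d03]),
        Finset.card_insert_of_notMem (by simp [d12, d13]),
        Finset.card_insert_of_notMem (by simp [d23]), Finset.card_singleton]
    have hsub : (({a0, a1, a2, a3} : Finset V) : Set V) ⊆ ({o}ᶜ : Set V) := by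
      intro y hy
      simp only [Finset.coe_insert, Set.mem_insert_iff, Finset.coe_singleton,
        Set.mem_singleton_iff] at hy
      rcases hy with rfl | rfl | rfl | rfl
      · exact hmem _ (Ne.symm ho0)
      · exact hmem _ (Ne.symm ho1)
      · exact hmem _ (Ne.symm ho2)
      · exact hmem _ (Ne.symm ho3)
    calc (3 : ℕ) ≤ 4 := by omega
      _ = (({a0, a1, a2, a3} : Finset V) : Set V).ncard := by
          rw [Set.ncard_coe_finset, h5]
      _ ≤ ({o}ᶜ : Set V).ncard := Set.ncard_le_ncard hsub (Set.toFinite _)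
  -- G with o deleted is 2-connected
  have hTCG : TwoConnOn G ({o}ᶜ : Set V) := by
    have hclass : ∀ w : V, w = a0 ∨ w = a1 ∨ w = a2 ∨ w = a3 ∨ w = a4 ∨
        (w ≠ a0 ∧ w ≠ a1 ∧ w ≠ a2 ∧ w ≠ a3 ∧ w ≠ a4) := by
      intro w
      by_cases hy0 : w = a0
      · exact Or.inl hy0
      by_cases hy1 : w = a1
      · exact Or.inr (Or.inl hy1)
      by_cases hy2 : w = a2
      · exact Or.inr (Or.inr (Or.inl hy2))
      by_cases hy3 : w = a3
      · exact Or.inr (Or.inr (Or.inr (Or.inl hy3)))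
      by_cases hy4 : w = a4
      · exact Or.inr (Or.inr (Or.inr (Or.inr (Or.inl hy4))))
      exact Or.inr (Or.inr (Or.inr (Or.inr (Or.inr ⟨hy0, hy1, hy2, hy3, hy4⟩))))
    refine ⟨hcardc, ?_, ?_⟩
    · -- connectivity, hub a0
      have hub : ∀ w, w ≠ o → ReflTransGen (StepOn G ({o}ᶜ : Set V)) w a0 := by
        intro w hwo
        have st : ∀ b c : V, b ≠ o → c ≠ o → G.Adj b c →
            StepOn G ({o}ᶜ : Set V) b c := fun b c hb hc h => ⟨hmem b hb, hmem c hc, h⟩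
        rcases hclass w with rfl | rfl | rfl | rfl | rfl | hout
        · exact ReflTransGen.refl
        · exact ReflTransGen.single (st _ _ hwo (Ne.symm ho0) e01.symm)
        · exact ReflTransGen.head (st _ _ hwo (Ne.symm ho1) e12.symm)
            (ReflTransGen.single (st _ _ (Ne.symm ho1) (Ne.symm ho0) e01.symm))
        · exact ReflTransGen.head (st _ _ hwo hoa4.symm e34)
            (ReflTransGen.single (st _ _ hoa4.symm (Ne.symm ho0) h04.symm))
        · exact ReflTransGen.single (st _ _ hwo (Ne.symm ho0) h04.symm)
        · exact ReflTransGen.single (st _ _ hwo (Ne.symm ho0)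
            (hbig w hout.1 hout.2.1 hout.2.2.1 hout.2.2.2.1 hout.2.2.2.2).symm)
      refine ⟨⟨a0, hmem a0 (Ne.symm ho0)⟩, ?_⟩
      intro b hb c hc
      exact (hub b hb).trans (rtg_symm (hub c hc))
    · -- deletions
      intro x hx
      have hxo : x ≠ o := hx
      have st : ∀ b c : V, b ≠ o → b ≠ x → c ≠ o → c ≠ x → G.Adj b c →
          StepOn G (({o}ᶜ : Set V) \ {x}) b c :=
        fun b c hb hb' hc hc' h => ⟨hmemd x b hb hb', hmemd x c hc hc', h⟩
      by_cases hxa0 : x = a0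
      · -- hub a4
        obtain rfl := hxa0.symm
        have hub : ∀ w, w ≠ o → w ≠ a0 →
            ReflTransGen (StepOn G (({o}ᶜ : Set V) \ {a0})) w a4 := by
          intro w hwo hwx
          rcases hclass w with rfl | rfl | rfl | rfl | rfl | hout
          · exact absurd rfl hwx
          · exact ReflTransGen.head (st _ _ hwo hwx (Ne.symm ho2) (Ne.symm d02) e12)
              (ReflTransGen.head (st _ _ (Ne.symm ho2) (Ne.symm d02) (Ne.symm ho3)
                (Ne.symm d03) e23)
                (ReflTransGen.single (st _ _ (Ne.symm ho3) (Ne.symm d03) hoa4.symm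
                  (Ne.symm d04) e34)))
          · exact ReflTransGen.head (st _ _ hwo hwx (Ne.symm ho3) (Ne.symm d03) e23)
              (ReflTransGen.single (st _ _ (Ne.symm ho3) (Ne.symm d03) hoa4.symm
                (Ne.symm d04) e34))
          · exact ReflTransGen.single (st _ _ hwo hwx hoa4.symm (Ne.symm d04) e34)
          · exact ReflTransGen.refl
          · -- outside : use the connectivity of K minus o
            have hwK : w ∈ K \ {o} := ⟨⟨hout.1, hout.2.1, hout.2.2.1, hout.2.2.2.1⟩, hwo⟩
            have ha4K' : a4 ∈ K \ {o} := ⟨ha4K, Ne.symm hoa4⟩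
            exact rtg_mono (t := (({o}ᶜ : Set V) \ {a0})) (fun y hy => ⟨hy.2, hy.1.1⟩) (hKo.2 w hwK a4 ha4K')
        refine ⟨⟨a4, hmemd a0 a4 (Ne.symm hoa4) (Ne.symm d04)⟩, ?_⟩
        intro b hb c hc
        exact (hub b hb.1 hb.2).trans (rtg_symm (hub c hc.1 hc.2))
      · -- hub a0
        have ha0x : a0 ≠ x := Ne.symm hxa0
        have hub : ∀ w, w ≠ o → w ≠ x →
            ReflTransGen (StepOn G (({o}ᶜ : Set V) \ {x})) w a0 := by
          intro w hwo hwx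
          rcases hclass w with rfl | rfl | rfl | rfl | rfl | hout
          · exact ReflTransGen.refl
          · exact ReflTransGen.single (st _ _ hwo hwx (Ne.symm ho0) ha0x e01.symm)
          · by_cases hxa1 : x = a1
            · obtain rfl := hxa1.symm
              exact ReflTransGen.head (st w a3 hwo hwx (Ne.symm ho3) (Ne.symm d13) e23)
                (ReflTransGen.head (st a3 a4 (Ne.symm ho3) (Ne.symm d13) (Ne.symm hoa4)
                  (Ne.symm d14) e34)
                  (ReflTransGen.single (st a4 a0 (Ne.symm hoa4) (Ne.symm d14) (Ne.symm ho0)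
                    ha0x h04.symm)))
            · exact ReflTransGen.head (st w a1 hwo hwx (Ne.symm ho1)
                (fun h => hxa1 h.symm) e12.symm)
                (ReflTransGen.single (st a1 a0 (Ne.symm ho1) (fun h => hxa1 h.symm)
                  (Ne.symm ho0) ha0x e01.symm))
          · by_cases hxa4 : x = a4
            · obtain rfl := hxa4.symm
              exact ReflTransGen.head (st w a2 hwo hwx (Ne.symm ho2) d24 e23.symm)
                (ReflTransGen.head (st a2 a1 (Ne.symm ho2) d24 (Ne.symm ho1)
                  d14 e12.symm)
                  (ReflTransGen.single (st a1 a0 (Ne.symm ho1) d14 (Ne.symm ho0)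
                    ha0x e01.symm)))
            · exact ReflTransGen.head (st w a4 hwo hwx (Ne.symm hoa4)
                (fun h => hxa4 h.symm) e34)
                (ReflTransGen.single (st a4 a0 (Ne.symm hoa4) (fun h => hxa4 h.symm)
                  (Ne.symm ho0) ha0x h04.symm))
          · exact ReflTransGen.single (st w a0 hwo hwx (Ne.symm ho0) ha0x h04.symm)
          · exact ReflTransGen.single (st w a0 hwo hwx (Ne.symm ho0) ha0x
              (hbig w hout.1 hout.2.1 hout.2.2.1 hout.2.2.2.1 hout.2.2.2.2).symm)
        refine ⟨⟨a0, hmemd x a0 (Ne.symm ho0) ha0x⟩, ?_⟩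
        intro b hb c hc
        exact (hub b hb.1 hb.2).trans (rtg_symm (hub c hc.1 hc.2))
  -- the complement with o deleted is 2-connected
  have hTCGc : TwoConnOn Gᶜ ({o}ᶜ : Set V) := by
    have hclass : ∀ w : V, w = a0 ∨ w = a1 ∨ w = a2 ∨ w = a3 ∨ w = a4 ∨
        (w ≠ a0 ∧ w ≠ a1 ∧ w ≠ a2 ∧ w ≠ a3 ∧ w ≠ a4) := by
      intro w
      by_cases hy0 : w = a0
      · exact Or.inl hy0
      by_cases hy1 : w = a1
      · exact Or.inr (Or.inl hy1)
      by_cases hy2 : w = a2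
      · exact Or.inr (Or.inr (Or.inl hy2))
      by_cases hy3 : w = a3
      · exact Or.inr (Or.inr (Or.inr (Or.inl hy3)))
      by_cases hy4 : w = a4
      · exact Or.inr (Or.inr (Or.inr (Or.inr (Or.inl hy4))))
      exact Or.inr (Or.inr (Or.inr (Or.inr (Or.inr ⟨hy0, hy1, hy2, hy3, hy4⟩))))
    refine ⟨hcardc, ?_, ?_⟩
    · -- connectivity, hub a2
      have st : ∀ b c : V, b ≠ o → c ≠ o → Gᶜ.Adj b c →
          StepOn Gᶜ ({o}ᶜ : Set V) b c := fun b c hb hc h => ⟨hmem b hb, hmem c hc, h⟩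
      have hub : ∀ w, w ≠ o → ReflTransGen (StepOn Gᶜ ({o}ᶜ : Set V)) w a2 := by
        intro w hwo
        rcases hclass w with rfl | rfl | rfl | rfl | rfl | hout
        · exact ReflTransGen.single (st _ _ hwo (Ne.symm ho2) c02)
        · exact ReflTransGen.head (st _ _ hwo (Ne.symm hoa4) c14)
            (ReflTransGen.single (st _ _ (Ne.symm hoa4) (Ne.symm ho2) c24.symm))
        · exact ReflTransGen.refl
        · exact ReflTransGen.head (st _ _ hwo (Ne.symm ho0) c03.symm)
            (ReflTransGen.single (st _ _ (Ne.symm ho0) (Ne.symm ho2) c02))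
        · exact ReflTransGen.single (st _ _ hwo (Ne.symm ho2) c24.symm)
        · exact ReflTransGen.single (st _ _ hwo (Ne.symm ho2)
            (cO2 w hout.2.1 hout.2.2.1 hout.2.2.2.1).symm)
      refine ⟨⟨a2, hmem a2 (Ne.symm ho2)⟩, ?_⟩
      intro b hb c hc
      exact (hub b hb).trans (rtg_symm (hub c hc))
    · -- deletions
      intro x hx
      have hxo : x ≠ o := hx
      have st : ∀ b c : V, b ≠ o → b ≠ x → c ≠ o → c ≠ x → Gᶜ.Adj b c →
          StepOn Gᶜ (({o}ᶜ : Set V) \ {x}) b c :=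
        fun b c hb hb' hc hc' h => ⟨hmemd x b hb hb', hmemd x c hc hc', h⟩
      by_cases hxa2 : x = a2
      · -- hub a0
        obtain rfl := hxa2.symm
        have hub : ∀ w, w ≠ o → w ≠ a2 →
            ReflTransGen (StepOn Gᶜ (({o}ᶜ : Set V) \ {a2})) w a0 := by
          intro w hwo hwx
          rcases hclass w with rfl | rfl | rfl | rfl | rfl | hout
          · exact ReflTransGen.refl
          · exact ReflTransGen.head (st w a3 hwo hwx (Ne.symm ho3) (Ne.symm d23) c13)
              (ReflTransGen.single (st a3 a0 (Ne.symm ho3) (Ne.symm d23) (Ne.symm ho0)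
                d02 c03.symm))
          · exact absurd rfl hwx
          · exact ReflTransGen.single (st w a0 hwo hwx (Ne.symm ho0) d02 c03.symm)
          · exact ReflTransGen.head (st w a1 hwo hwx (Ne.symm ho1) d12 c14.symm)
              (ReflTransGen.head (st a1 a3 (Ne.symm ho1) d12 (Ne.symm ho3)
                (Ne.symm d23) c13)
                (ReflTransGen.single (st a3 a0 (Ne.symm ho3) (Ne.symm d23) (Ne.symm ho0)
                  d02 c03.symm)))
          · exact ReflTransGen.head (st w a1 hwo hwx (Ne.symm ho1) d12
              (cO1 w hout.1 hout.2.1 hout.2.2.1).symm)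
              (ReflTransGen.head (st a1 a3 (Ne.symm ho1) d12 (Ne.symm ho3)
                (Ne.symm d23) c13)
                (ReflTransGen.single (st a3 a0 (Ne.symm ho3) (Ne.symm d23) (Ne.symm ho0)
                  d02 c03.symm)))
        refine ⟨⟨a0, hmemd a2 a0 (Ne.symm ho0) d02⟩, ?_⟩
        intro b hb c hc
        exact (hub b hb.1 hb.2).trans (rtg_symm (hub c hc.1 hc.2))
      · -- hub a2
        have ha2x : a2 ≠ x := Ne.symm hxa2
        have hub : ∀ w, w ≠ o → w ≠ x →
            ReflTransGen (StepOn Gᶜ (({o}ᶜ : Set V) \ {x})) w a2 := by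
          intro w hwo hwx
          rcases hclass w with rfl | rfl | rfl | rfl | rfl | hout
          · exact ReflTransGen.single (st w a2 hwo hwx (Ne.symm ho2) ha2x c02)
          · by_cases hxa4 : x = a4
            · obtain rfl := hxa4.symm
              exact ReflTransGen.head (st w a3 hwo hwx (Ne.symm ho3) d34 c13)
                (ReflTransGen.head (st a3 a0 (Ne.symm ho3) d34 (Ne.symm ho0)
                  d04 c03.symm)
                  (ReflTransGen.single (st a0 a2 (Ne.symm ho0) d04 (Ne.symm ho2)
                    ha2x c02)))
            · exact ReflTransGen.head (st w a4 hwo hwx (Ne.symm hoa4)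
                (fun h => hxa4 h.symm) c14)
                (ReflTransGen.single (st a4 a2 (Ne.symm hoa4) (fun h => hxa4 h.symm)
                  (Ne.symm ho2) ha2x c24.symm))
          · exact ReflTransGen.refl
          · by_cases hxa0 : x = a0
            · obtain rfl := hxa0.symm
              exact ReflTransGen.head (st w a1 hwo hwx (Ne.symm ho1) (Ne.symm d01) c13.symm)
                (ReflTransGen.head (st a1 a4 (Ne.symm ho1) (Ne.symm d01) (Ne.symm hoa4)
                  (Ne.symm d04) c14)
                  (ReflTransGen.single (st a4 a2 (Ne.symm hoa4) (Ne.symm d04) (Ne.symm ho2)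
                    ha2x c24.symm)))
            · exact ReflTransGen.head (st w a0 hwo hwx (Ne.symm ho0)
                (fun h => hxa0 h.symm) c03.symm)
                (ReflTransGen.single (st a0 a2 (Ne.symm ho0) (fun h => hxa0 h.symm)
                  (Ne.symm ho2) ha2x c02))
          · exact ReflTransGen.single (st w a2 hwo hwx (Ne.symm ho2) ha2x c24.symm)
          · exact ReflTransGen.single (st w a2 hwo hwx (Ne.symm ho2) ha2x
              (cO2 w hout.2.1 hout.2.2.1 hout.2.2.2.1).symm)
        refine ⟨⟨a2, hmemd x a2 (Ne.symm ho2) ha2x⟩, ?_⟩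
        intro b hb c hc
        exact (hub b hb.1 hb.2).trans (rtg_symm (hub c hc.1 hc.2))
  exact isTwoCograph_elim hcog (twoConnOn_univ_induce hTCG)
    (by rw [compl_induce_eq]; exact twoConnOn_univ_induce hTCGc)

end Aux

theorem path_C5 {V : Type} [Fintype V] [DecidableEq V]
    (G : SimpleGraph V) [DecidableRel G.Adj]
    (hG : IsIMMNon2Cograph G) (hGc : IsIMMNon2Cograph Gᶜ)
    (u v : V) (p : G.Walk u v) (hp : p.IsPath) (hlen : 3 < p.length)
    (hdeg : ∀ x ∈ p.support, x ≠ u → x ≠ v → G.degree x = 2) :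
    Nonempty (G ≃g SimpleGraph.cycleGraph 5) := by
  classical
  obtain ⟨hnc, hmin⟩ := hG
  obtain ⟨S, hS1, hS2⟩ := exists_witness_of_not_isTwoCograph hnc
  have hSuniv : (S : Set V) = Set.univ := by
    by_contra hne
    have hlt : Fintype.card ↥(S : Set V) < Fintype.card V := by
      have hcoe : Fintype.card ↥(S : Set V) = S.card := by
        rw [← Nat.card_eq_fintype_card, Nat.card_coe_set_eq, Set.ncard_coe_finset]
      rw [hcoe]
      have hSu : S ≠ Finset.univ := fun h => hne (by rw [h, Finset.coe_univ])
      calc S.card < Finset.univ.card :=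
            Finset.card_lt_card (Finset.ssubset_univ_iff.2 hSu)
        _ = Fintype.card V := Finset.card_univ
    have hcog := hmin ↥(S : Set V) (G.induce (S : Set V)) (isInducedMinor_induce G _) hlt
    exact isTwoCograph_elim hcog (twoConnOn_univ_induce hS1)
      (by rw [compl_induce_eq]; exact twoConnOn_univ_induce hS2)
  rw [hSuniv] at hS1 hS2
  -- basic path data
  have hadj : ∀ i, i < p.length → G.Adj (p.getVert i) (p.getVert (i + 1)) :=
    fun i hi => p.adj_getVert_succ hi
  have hinj : ∀ i j, i ≤ p.length → j ≤ p.length → p.getVert i = p.getVert j → i = j :=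
    getVert_inj hp
  have hchar : ∀ i, 1 ≤ i → i ≤ p.length - 1 →
      ∀ w, G.Adj (p.getVert i) w ↔ w = p.getVert (i - 1) ∨ w = p.getVert (i + 1) := by
    intro i hi1 hik w
    have hik' : i < p.length := by omega
    have hmem : p.getVert i ∈ p.support :=
      SimpleGraph.Walk.mem_support_iff_exists_getVert.2 ⟨i, rfl, by omega⟩
    have hu : p.getVert i ≠ u := by
      intro h
      have := hinj i 0 (by omega) (by omega) (by rw [h, p.getVert_zero])
      omega
    have hv : p.getVert i ≠ v := by
      intro h
      have := hinj i p.length (by omega) le_rfl (by rw [h, p.getVert_length])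
      omega
    have hdeg2 : G.degree (p.getVert i) = 2 := hdeg _ hmem hu hv
    have hne2 : p.getVert (i - 1) ≠ p.getVert (i + 1) := by
      intro h
      have := hinj (i - 1) (i + 1) (by omega) (by omega) h
      omega
    have hA : G.Adj (p.getVert i) (p.getVert (i - 1)) := by
      have h' := hadj (i - 1) (by omega)
      rw [show i - 1 + 1 = i by omega] at h'
      exact h'.symm
    have hB : G.Adj (p.getVert i) (p.getVert (i + 1)) := hadj i (by omega)
    exact nbr_char hdeg2 hne2 hA hB w
  have hch1 : ∀ w, G.Adj (p.getVert 1) w ↔ w = p.getVert 0 ∨ w = p.getVert 2 := by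
    exact hchar 1 (by omega) (by omega)
  have hch2 : ∀ w, G.Adj (p.getVert 2) w ↔ w = p.getVert 1 ∨ w = p.getVert 3 := by
    exact hchar 2 (by omega) (by omega)
  have hch3 : ∀ w, G.Adj (p.getVert 3) w ↔ w = p.getVert 2 ∨ w = p.getVert 4 := by
    exact hchar 3 (by omega) (by omega)
  -- the path has length exactly 4
  have hk4 : p.length = 4 := by
    by_contra hk5'
    have hk5 : 5 ≤ p.length := by omega
    have hch4 : ∀ w, G.Adj (p.getVert 4) w ↔ w = p.getVert 3 ∨ w = p.getVert 5 := by
      have h' := hchar 4 (by omega) (by omega)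
      exact h'
    have hc6 : 6 ≤ Fintype.card V := by
      have hi6 : Function.Injective (fun i : Fin 6 => p.getVert i.1) := by
        intro i j h
        exact Fin.ext (hinj i.1 j.1 (by omega) (by omega) h)
      simpa using Fintype.card_le_of_injective _ hi6
    have hd : ∀ i j, i < 6 → j < 6 → i ≠ j → p.getVert i ≠ p.getVert j := by
      intro i j hi hj hij h
      exact hij (hinj i j (by omega) (by omega) h)
    have hn04 : ¬ G.Adj (p.getVert 0) (p.getVert 4) := by
      intro h
      rcases (hch4 (p.getVert 0)).1 h.symm with h' | h'
      · exact hd 0 3 (by omega) (by omega) (by omega) h'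
      · exact hd 0 5 (by omega) (by omega) (by omega) h'
    exact contr_machine G hmin (p.getVert 0) (p.getVert 1) (p.getVert 2) (p.getVert 3)
      (p.getVert 4)
      (hd 0 1 (by omega) (by omega) (by omega)) (hd 0 2 (by omega) (by omega) (by omega))
      (hd 0 3 (by omega) (by omega) (by omega)) (hd 0 4 (by omega) (by omega) (by omega))
      (hd 1 2 (by omega) (by omega) (by omega)) (hd 1 3 (by omega) (by omega) (by omega))
      (hd 1 4 (by omega) (by omega) (by omega)) (hd 2 3 (by omega) (by omega) (by omega))
      (hd 2 4 (by omega) (by omega) (by omega)) (hd 3 4 (by omega) (by omega) (by omega))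
      hch1 hch2 hch3 hc6
      ⟨p.getVert 4, (hd 4 0 (by omega) (by omega) (by omega)),
        (hd 4 1 (by omega) (by omega) (by omega)), (hd 4 2 (by omega) (by omega) (by omega)),
        (hd 4 3 (by omega) (by omega) (by omega)), fun h => hn04 h⟩
      ⟨p.getVert 0, (hd 0 1 (by omega) (by omega) (by omega)),
        (hd 0 2 (by omega) (by omega) (by omega)), (hd 0 3 (by omega) (by omega) (by omega)),
        (hd 0 4 (by omega) (by omega) (by omega)), fun h => hn04 h.symm⟩
      hS1
  have hd : ∀ i j, i < 5 → j < 5 → i ≠ j → p.getVert i ≠ p.getVert j := by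
    intro i j hi hj hij h
    exact hij (hinj i j (by omega) (by omega) h)
  by_cases hbig : 6 ≤ Fintype.card V
  · exfalso
    by_cases hD0 : ∀ w, w ≠ p.getVert 0 → w ≠ p.getVert 1 → w ≠ p.getVert 2 →
        w ≠ p.getVert 3 → G.Adj (p.getVert 0) w
    · exact del_machine G hmin (p.getVert 0) (p.getVert 1) (p.getVert 2) (p.getVert 3)
        (p.getVert 4)
        (hd 0 1 (by omega) (by omega) (by omega)) (hd 0 2 (by omega) (by omega) (by omega))
        (hd 0 3 (by omega) (by omega) (by omega)) (hd 0 4 (by omega) (by omega) (by omega))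
        (hd 1 2 (by omega) (by omega) (by omega)) (hd 1 3 (by omega) (by omega) (by omega))
        (hd 1 4 (by omega) (by omega) (by omega)) (hd 2 3 (by omega) (by omega) (by omega))
        (hd 2 4 (by omega) (by omega) (by omega)) (hd 3 4 (by omega) (by omega) (by omega))
        hch1 hch2 hch3 hbig
        (fun w w0 w1 w2 w3 _ => hD0 w w0 w1 w2 w3)
        (hD0 (p.getVert 4) (hd 4 0 (by omega) (by omega) (by omega))
          (hd 4 1 (by omega) (by omega) (by omega)) (hd 4 2 (by omega) (by omega) (by omega))
          (hd 4 3 (by omega) (by omega) (by omega)))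
        hS1
    · by_cases hD4 : ∀ w, w ≠ p.getVert 1 → w ≠ p.getVert 2 → w ≠ p.getVert 3 →
          w ≠ p.getVert 4 → G.Adj (p.getVert 4) w
      · refine del_machine G hmin (p.getVert 4) (p.getVert 3) (p.getVert 2) (p.getVert 1)
          (p.getVert 0)
          (hd 4 3 (by omega) (by omega) (by omega)) (hd 4 2 (by omega) (by omega) (by omega))
          (hd 4 1 (by omega) (by omega) (by omega)) (hd 4 0 (by omega) (by omega) (by omega))
          (hd 3 2 (by omega) (by omega) (by omega)) (hd 3 1 (by omega) (by omega) (by omega))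
          (hd 3 0 (by omega) (by omega) (by omega)) (hd 2 1 (by omega) (by omega) (by omega))
          (hd 2 0 (by omega) (by omega) (by omega)) (hd 1 0 (by omega) (by omega) (by omega))
          (fun w => (hch3 w).trans or_comm) (fun w => (hch2 w).trans or_comm)
          (fun w => (hch1 w).trans or_comm) hbig
          (fun w w4 w3 w2 w1 w0 => hD4 w w1 w2 w3 w4)
          ((hD4 (p.getVert 0) (hd 0 1 (by omega) (by omega) (by omega))
            (hd 0 2 (by omega) (by omega) (by omega)) (hd 0 3 (by omega) (by omega) (by omega))
            (hd 0 4 (by omega) (by omega) (by omega))))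
          hS1
      · push_neg at hD0 hD4
        obtain ⟨w0, hw00, hw01, hw02, hw03, hw0n⟩ := hD0
        obtain ⟨w4, hw41, hw42, hw43, hw44, hw4n⟩ := hD4
        exact contr_machine G hmin (p.getVert 0) (p.getVert 1) (p.getVert 2) (p.getVert 3)
          (p.getVert 4)
          (hd 0 1 (by omega) (by omega) (by omega)) (hd 0 2 (by omega) (by omega) (by omega))
          (hd 0 3 (by omega) (by omega) (by omega)) (hd 0 4 (by omega) (by omega) (by omega))
          (hd 1 2 (by omega) (by omega) (by omega)) (hd 1 3 (by omega) (by omega) (by omega))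
          (hd 1 4 (by omega) (by omega) (by omega)) (hd 2 3 (by omega) (by omega) (by omega))
          (hd 2 4 (by omega) (by omega) (by omega)) (hd 3 4 (by omega) (by omega) (by omega))
          hch1 hch2 hch3 hbig
          ⟨w0, hw00, hw01, hw02, hw03, hw0n⟩ ⟨w4, hw41, hw42, hw43, hw44, hw4n⟩
          hS1
  -- now the graph has exactly five vertices
  · have hi5 : Function.Injective (fun i : Fin 5 => p.getVert i.1) := by
      intro i j h
      exact Fin.ext (hinj i.1 j.1 (by omega) (by omega) h)
    have hn5 : Fintype.card V = 5 := by
      have h5 : 5 ≤ Fintype.card V := by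
        simpa using Fintype.card_le_of_injective _ hi5
      omega
    have hbij : Function.Bijective (fun i : Fin 5 => p.getVert i.1) := by
      rw [Fintype.bijective_iff_injective_and_card]
      exact ⟨hi5, by simp [hn5]⟩
    have hall : ∀ w : V, w = p.getVert 0 ∨ w = p.getVert 1 ∨ w = p.getVert 2 ∨
        w = p.getVert 3 ∨ w = p.getVert 4 := by
      intro w
      obtain ⟨i, hi⟩ := hbij.2 w
      fin_cases i
      · exact Or.inl hi.symm
      · exact Or.inr (Or.inl hi.symm)
      · exact Or.inr (Or.inr (Or.inl hi.symm))
      · exact Or.inr (Or.inr (Or.inr (Or.inl hi.symm)))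
      · exact Or.inr (Or.inr (Or.inr (Or.inr hi.symm)))
    have hA01 : G.Adj (p.getVert 0) (p.getVert 1) := by
      exact hadj 0 (by omega)
    have hA12 : G.Adj (p.getVert 1) (p.getVert 2) := by
      exact hadj 1 (by omega)
    have hA23 : G.Adj (p.getVert 2) (p.getVert 3) := by
      exact hadj 2 (by omega)
    have hA34 : G.Adj (p.getVert 3) (p.getVert 4) := by
      exact hadj 3 (by omega)
    have hN02 : ¬ G.Adj (p.getVert 0) (p.getVert 2) := by
      intro h
      rcases (hch2 (p.getVert 0)).1 h.symm with h' | h'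
      · exact hd 0 1 (by omega) (by omega) (by omega) h'
      · exact hd 0 3 (by omega) (by omega) (by omega) h'
    have hN03 : ¬ G.Adj (p.getVert 0) (p.getVert 3) := by
      intro h
      rcases (hch3 (p.getVert 0)).1 h.symm with h' | h'
      · exact hd 0 2 (by omega) (by omega) (by omega) h'
      · exact hd 0 4 (by omega) (by omega) (by omega) h'
    have hN13 : ¬ G.Adj (p.getVert 1) (p.getVert 3) := by
      intro h
      rcases (hch1 (p.getVert 3)).1 h with h' | h'
      · exact hd 3 0 (by omega) (by omega) (by omega) h'
      · exact hd 3 2 (by omega) (by omega) (by omega) h'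
    have hN14 : ¬ G.Adj (p.getVert 1) (p.getVert 4) := by
      intro h
      rcases (hch1 (p.getVert 4)).1 h with h' | h'
      · exact hd 4 0 (by omega) (by omega) (by omega) h'
      · exact hd 4 2 (by omega) (by omega) (by omega) h'
    have hN24 : ¬ G.Adj (p.getVert 2) (p.getVert 4) := by
      intro h
      rcases (hch2 (p.getVert 4)).1 h with h' | h'
      · exact hd 4 1 (by omega) (by omega) (by omega) h'
      · exact hd 4 3 (by omega) (by omega) (by omega) h'
    have hA04 : G.Adj (p.getVert 0) (p.getVert 4) := by
      by_contra hno
      obtain ⟨-, -, hdel⟩ := hS1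
      have hconn := hdel (p.getVert 2) (Set.mem_univ _)
      have hm0 : p.getVert 0 ∈ Set.univ \ {p.getVert 2} :=
        ⟨Set.mem_univ _, hd 0 2 (by omega) (by omega) (by omega)⟩
      have hm3 : p.getVert 3 ∈ Set.univ \ {p.getVert 2} :=
        ⟨Set.mem_univ _, hd 3 2 (by omega) (by omega) (by omega)⟩
      have hrtg := hconn.2 (p.getVert 0) hm0 (p.getVert 3) hm3
      have hclosed : ∀ b, Relation.ReflTransGen (StepOn G (Set.univ \ {p.getVert 2})) (p.getVert 0) b →
          b = p.getVert 0 ∨ b = p.getVert 1 := by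
        intro b h
        induction h with
        | refl => exact Or.inl rfl
        | @tail c d hc hstep ih =>
            have hd2 : d ≠ p.getVert 2 := hstep.2.1.2
            rcases ih with rfl | rfl
            · rcases hall d with rfl | rfl | rfl | rfl | rfl
              · exact absurd hstep.2.2 (G.irrefl)
              · exact Or.inr rfl
              · exact absurd rfl hd2
              · exact absurd hstep.2.2.symm ((fun h => hN03 h) ∘ SimpleGraph.Adj.symm)
              · exact absurd hstep.2.2 hno
            · rcases (hch1 d).1 hstep.2.2 with rfl | rfl
              · exact Or.inl rfl
              · exact absurd rfl hd2
      rcases hclosed _ hrtg with h | h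
      · exact hd 3 0 (by omega) (by omega) (by omega) h
      · exact hd 3 1 (by omega) (by omega) (by omega) h
    refine ⟨SimpleGraph.Iso.symm ⟨Equiv.ofBijective _ hbij, ?_⟩⟩
    intro i j
    show G.Adj (p.getVert i.1) (p.getVert j.1) ↔ (SimpleGraph.cycleGraph 5).Adj i j
    fin_cases i <;> fin_cases j
    · exact iff_of_false (G.irrefl) (by decide)
    · exact iff_of_true hA01 (by decide)
    · exact iff_of_false hN02 (by decide)
    · exact iff_of_false hN03 (by decide)
    · exact iff_of_true hA04 (by decide)
    · exact iff_of_true hA01.symm (by decide)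
    · exact iff_of_false (G.irrefl) (by decide)
    · exact iff_of_true hA12 (by decide)
    · exact iff_of_false hN13 (by decide)
    · exact iff_of_false hN14 (by decide)
    · exact iff_of_false (fun h => hN02 h.symm) (by decide)
    · exact iff_of_true hA12.symm (by decide)
    · exact iff_of_false (G.irrefl) (by decide)
    · exact iff_of_true hA23 (by decide)
    · exact iff_of_false hN24 (by decide)
    · exact iff_of_false (fun h => hN03 h.symm) (by decide)
    · exact iff_of_false (fun h => hN13 h.symm) (by decide)
    · exact iff_of_true hA23.symm (by decide)
    · exact iff_of_false (G.irrefl) (by decide)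
    · exact iff_of_true hA34 (by decide)
    · exact iff_of_true hA04.symm (by decide)
    · exact iff_of_false (fun h => hN14 h.symm) (by decide)
    · exact iff_of_false (fun h => hN24 h.symm) (by decide)
    · exact iff_of_true hA34.symm (by decide)
    · exact iff_of_false (G.irrefl) (by decide)
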